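/- For every positive integer ℓ and every s₀ ≥ 0 with s₀ ≠ s̄_ℓ, the map t ↦ φ(ℓ, s₀, t) is injective on [0,∞) and its image is exactly the half-open interval [s₀, s̄_ℓ) if s₀ < s̄_ℓ, and exactly (s̄_ℓ, s₀] if s₀ > s̄_ℓ; in particular, for every s in that interval there is a unique t ≥ 0 with φ(ℓ, s₀, t) = s. -/

import Mathlib

open Set Filter Topology

lemma key_ode (F : ℝ → ℝ) (a b L : ℝ) (x : ℝ → ℝ)
    (hab : a < b) (hL : 0 ≤ L)
    (hx0 : x 0 = a)
    (hderiv : ∀ t ∈ Set.Ici (0:ℝ), HasDerivWithinAt x (F (x t)) (Set.Ici 0) t)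
    (hFcont : ContinuousOn F (Set.Icc a b))
    (hFpos : ∀ s ∈ Set.Ico a b, 0 < F s)
    (hFb : F b = 0)
    (hFle : ∀ s ∈ Set.Icc a b, F s ≤ L * (b - s)) :
    StrictMonoOn x (Set.Ici 0) ∧ x '' Set.Ici 0 = Set.Ico a b := by
  have hF0 : ∀ s ∈ Set.Icc a b, 0 ≤ F s := by
    intro s hs
    rcases eq_or_lt_of_le hs.2 with h | h
    · rw [h, hFb]
    · exact (hFpos s ⟨hs.1, h⟩).le
  have hxc : ContinuousOn x (Set.Ici 0) := fun t ht => (hderiv t ht).continuousWithinAt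
  have hda : ∀ t : ℝ, 0 < t → HasDerivAt x (F (x t)) t := fun t ht =>
    (hderiv t ht.le).hasDerivAt (Ici_mem_nhds ht)
  -- Gronwall-type estimate
  have gron : ∀ T : ℝ, 0 ≤ T → (∀ u ∈ Set.Icc 0 T, x u ∈ Set.Icc a b) → x T < b := by
    intro T hT hI
    set g : ℝ → ℝ := fun t => (b - x t) * Real.exp (L * t) with hg
    have hgd : ∀ t ∈ Set.Ioo 0 T, HasDerivAt g
        (-F (x t) * Real.exp (L * t) + (b - x t) * (Real.exp (L * t) * L)) t := by
      intro t ht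
      have H := ((hasDerivAt_const t b).sub (hda t ht.1)).mul
        (((hasDerivAt_id t).const_mul L).exp)
      refine H.congr_deriv ?_
      simp only [id_eq, Pi.sub_apply]
      ring
    have hgc : ContinuousOn g (Set.Icc 0 T) := by
      apply ContinuousOn.mul
      · exact continuousOn_const.sub (hxc.mono (fun u hu => hu.1))
      · exact (Real.continuous_exp.comp (continuous_const.mul continuous_id)).continuousOn
    have hmono : MonotoneOn g (Set.Icc 0 T) := by
      apply monotoneOn_of_deriv_nonneg (convex_Icc 0 T) hgc
      · rw [interior_Icc]
        exact fun t ht => ((hgd t ht).differentiableAt).differentiableWithinAt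
      · rw [interior_Icc]
        intro t ht
        rw [(hgd t ht).deriv]
        have hx_mem := hI t ⟨ht.1.le, ht.2.le⟩
        have h1 := hFle (x t) hx_mem
        have h2 : (0:ℝ) < Real.exp (L * t) := Real.exp_pos _
        nlinarith [mul_nonneg h2.le (sub_nonneg.2 h1)]
    have h0 : g 0 ≤ g T := hmono ⟨le_refl 0, hT⟩ ⟨hT, le_refl T⟩ hT
    have hg0 : g 0 = b - a := by simp [hg, hx0]
    have hE : (0:ℝ) < Real.exp (L * T) := Real.exp_pos _
    simp only [hg] at h0
    rw [hx0, mul_zero, Real.exp_zero, mul_one] at h0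
    by_contra hxb
    push_neg at hxb
    nlinarith [mul_nonpos_of_nonpos_of_nonneg (by linarith : b - x T ≤ 0) hE.le]
  -- invariance
  have hinv : ∀ t : ℝ, 0 ≤ t → x t ∈ Set.Icc a b := by
    by_contra h
    push_neg at h
    obtain ⟨T, hT, hTn⟩ := h
    set E : Set ℝ := {t : ℝ | 0 ≤ t ∧ x t ∉ Set.Icc a b} with hE
    have hEne : E.Nonempty := ⟨T, hT, hTn⟩
    have hEbdd : BddBelow E := ⟨0, fun e he => he.1⟩
    set c := sInf E with hc
    have hc0 : 0 ≤ c := le_csInf hEne fun e he => he.1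
    have hpre : ∀ u : ℝ, 0 ≤ u → u < c → x u ∈ Set.Icc a b := by
      intro u hu huc
      by_contra hxn
      exact absurd (csInf_le hEbdd ⟨hu, hxn⟩) (not_le.2 huc)
    have hcmem : x c ∈ Set.Icc a b := by
      rcases eq_or_lt_of_le hc0 with h0 | h0
      · rw [← h0, hx0]; exact ⟨le_refl a, hab.le⟩
      · have hne : (𝓝[Set.Ico 0 c] c).NeBot := by
          rw [← mem_closure_iff_nhdsWithin_neBot, closure_Ico (ne_of_lt h0)]
          exact ⟨hc0, le_refl c⟩
        have htd : Tendsto x (𝓝[Set.Ico 0 c] c) (𝓝 (x c)) :=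
          (hxc c hc0).mono_left (nhdsWithin_mono c fun u hu => hu.1)
        refine isClosed_Icc.mem_of_tendsto htd ?_
        filter_upwards [self_mem_nhdsWithin] with u hu
        exact hpre u hu.1 hu.2
    have hIcc : ∀ u ∈ Set.Icc 0 c, x u ∈ Set.Icc a b := by
      intro u hu
      rcases eq_or_lt_of_le hu.2 with h | h
      · rw [h]; exact hcmem
      · exact hpre u hu.1 h
    -- x c < b by Gronwall
    have hlt : x c < b := gron c hc0 hIcc
    have hge : a ≤ x c := hcmem.1
    have hFc : 0 < F (x c) := hFpos _ ⟨hge, hlt⟩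
    -- eventually after c, x u > x c and x u < b
    have hsub : Set.Ioi c ⊆ Set.Ici (0:ℝ) \ {c} :=
      fun u hu => ⟨le_trans hc0 (le_of_lt hu), ne_of_gt hu⟩
    have hslope := hderiv c hc0
    rw [hasDerivWithinAt_iff_tendsto_slope] at hslope
    have h1 : ∀ᶠ u in 𝓝[>] c, 0 < slope x c u :=
      (hslope.mono_left (nhdsWithin_mono c hsub)).eventually (eventually_gt_nhds hFc)
    have h2 : ∀ᶠ u in 𝓝[>] c, x u < b :=
      (((hxc c hc0).mono_left (nhdsWithin_mono c fun u hu => le_trans hc0 (le_of_lt hu)))).eventually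
        (eventually_lt_nhds hlt)
    have h3 : ∀ᶠ u in 𝓝[>] c, u ∉ E := by
      filter_upwards [h1, h2, self_mem_nhdsWithin] with u hu1 hu2 hu3
      have huc : c < u := hu3
      have : 0 < x u - x c := by
        have := mul_pos hu1 (sub_pos.2 huc)
        rw [slope_def_field] at this
        have hne : u - c ≠ 0 := ne_of_gt (sub_pos.2 huc)
        calc (0:ℝ) < (x u - x c) / (u - c) * (u - c) := this
          _ = x u - x c := div_mul_cancel₀ _ hne
      intro huE
      exact huE.2 ⟨le_trans hge (by linarith), hu2.le⟩
    -- contradiction with c = sInf E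
    rw [eventually_nhdsWithin_iff] at h3
    obtain ⟨ε, hε, hball⟩ := Metric.eventually_nhds_iff.1 h3
    have hlow : ∀ e ∈ E, c + ε ≤ e := by
      intro e he
      have hec : c ≤ e := csInf_le hEbdd he
      have hec' : c < e := lt_of_le_of_ne hec (by rintro rfl; exact he.2 hcmem)
      by_contra hlt'
      push_neg at hlt'
      have : dist e c < ε := by
        rw [Real.dist_eq, abs_of_pos (sub_pos.2 hec')]; linarith
      exact (hball this hec') he
    have := le_csInf hEne hlow
    linarith
  -- global strict bound below b
  have hblt : ∀ t : ℝ, 0 ≤ t → x t < b := by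
    intro t ht
    exact gron t ht fun u hu => hinv u hu.1
  -- strict monotonicity
  have hsm : StrictMonoOn x (Set.Ici 0) := by
    apply strictMonoOn_of_deriv_pos (convex_Ici 0) hxc
    intro t ht
    rw [interior_Ici] at ht
    rw [(hda t ht).deriv]
    exact hFpos _ ⟨(hinv t ht.le).1, hblt t ht.le⟩
  refine ⟨hsm, ?_⟩
  ext s
  constructor
  · rintro ⟨t, ht, rfl⟩
    refine ⟨?_, hblt t ht⟩
    rcases eq_or_lt_of_le (Set.mem_Ici.1 ht) with h | h
    · rw [← h, hx0]
    · rw [← hx0]; exact (hsm Set.self_mem_Ici ht h).le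
  · intro hs
    by_contra hns
    simp only [Set.mem_image, Set.mem_Ici] at hns
    have hns' : ∀ t : ℝ, 0 ≤ t → x t ≠ s := by
      intro t ht heq
      exact hns ⟨t, ht, heq⟩
    have hlts : ∀ t : ℝ, 0 ≤ t → x t < s := by
      intro t ht
      rcases lt_or_ge (x t) s with h | h
      · exact h
      · exfalso
        have hsm' : s ∈ Set.Icc (x 0) (x t) := ⟨hx0 ▸ hs.1, h⟩
        obtain ⟨u, hu, hxu⟩ := intermediate_value_Icc ht (hxc.mono fun u hu => hu.1) hsm'
        exact hns' u hu.1 hxu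
    -- min of F on [a, s]
    have hssub : Set.Icc a s ⊆ Set.Icc a b := Set.Icc_subset_Icc (le_refl a) hs.2.le
    obtain ⟨cm, hcm, hcmin'⟩ := isCompact_Icc.exists_isMinOn (Set.nonempty_Icc.2 hs.1)
      (hFcont.mono hssub)
    have hcmin : ∀ y ∈ Set.Icc a s, F cm ≤ F y := fun y hy => hcmin' hy
    have hε : 0 < F cm := hFpos cm ⟨hcm.1, lt_of_le_of_lt hcm.2 hs.2⟩
    set ε := F cm with hεdef
    -- h(t) = x t - ε t is monotone
    have hmono : MonotoneOn (fun t => x t - ε * t) (Set.Ici 0) := by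
      apply monotoneOn_of_deriv_nonneg (convex_Ici 0)
      · exact hxc.sub (continuous_const.mul continuous_id).continuousOn
      · rw [interior_Ici]
        intro t ht
        have H := (hda t ht).sub ((hasDerivAt_id t).const_mul ε)
        simp only [id_eq, mul_one] at H
        exact H.differentiableAt.differentiableWithinAt
      · rw [interior_Ici]
        intro t ht
        have H := (hda t ht).sub ((hasDerivAt_id t).const_mul ε)
        simp only [id_eq, mul_one] at H
        rw [show deriv (fun t => x t - ε * t) t = F (x t) - ε from H.deriv]
        have hxm : x t ∈ Set.Icc a s := ⟨(hinv t ht.le).1, (hlts t ht.le).le⟩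
        have := hcmin (x t) hxm
        linarith
    set T := (s - a) / ε + 1 with hTdef
    have hT0 : 0 ≤ T := by
      have h1 : 0 ≤ (s - a) / ε := div_nonneg (by linarith [hs.1]) hε.le
      rw [hTdef]
      linarith
    have := hmono (Set.self_mem_Ici) (Set.mem_Ici.2 hT0) hT0
    simp only [mul_zero, sub_zero, hx0] at this
    have hεT : ε * T = (s - a) + ε := by
      rw [hTdef]; field_simp
    have : s + ε ≤ x T := by nlinarith
    have := hlts T hT0
    linarith
lemma lip_helper (μ : ℝ → ℝ) (hμC1 : ContDiffOn ℝ 1 μ (Set.Ici 0)) (M : ℝ) :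
    ∃ C : ℝ, 0 ≤ C ∧ ∀ p ∈ Set.Icc (0:ℝ) M, ∀ q ∈ Set.Icc (0:ℝ) M,
      |μ q - μ p| ≤ C * |q - p| := by
  set f' := derivWithin μ (Set.Ici 0) with hf'
  have hdiff : DifferentiableOn ℝ μ (Set.Ici 0) := hμC1.differentiableOn one_ne_zero
  have hcont : ContinuousOn f' (Set.Ici 0) :=
    hμC1.continuousOn_derivWithin (uniqueDiffOn_Ici 0) le_rfl
  have hsub : Set.Icc (0:ℝ) M ⊆ Set.Ici 0 := fun u hu => hu.1
  obtain ⟨C0, hC0⟩ := isCompact_Icc.exists_bound_of_continuousOn (hcont.mono hsub)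
  refine ⟨max C0 0, le_max_right _ _, ?_⟩
  intro p hp q hq
  have hder : ∀ u ∈ Set.Icc (0:ℝ) M, HasDerivWithinAt μ (f' u) (Set.Icc 0 M) u :=
    fun u hu => ((hdiff u (hsub hu)).hasDerivWithinAt).mono hsub
  have hbd : ∀ u ∈ Set.Icc (0:ℝ) M, ‖f' u‖ ≤ max C0 0 :=
    fun u hu => le_trans (hC0 u hu) (le_max_left _ _)
  have := Convex.norm_image_sub_le_of_norm_hasDerivWithin_le hder hbd (convex_Icc 0 M) hp hq
  simpa [Real.norm_eq_abs] using this

/-- For s₀ ≥ 0 with s₀ ≠ s̄_ℓ, the map t ↦ φ(ℓ, s₀, t) is injective on [0,∞) and its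
image is exactly [s₀, s̄_ℓ) if s₀ < s̄_ℓ and exactly (s̄_ℓ, s₀] if s₀ > s̄_ℓ; in
particular every s in that interval is hit at a unique time t ≥ 0. -/
theorem stmt_8
    (D sIn k : ℝ) (μ : ℝ → ℝ)
    (hD : 0 < D) (hsIn : 0 < sIn) (hk : 0 < k)
    (hμC1 : ContDiffOn ℝ 1 μ (Set.Ici 0))
    (hμmono : StrictMonoOn μ (Set.Ici 0))
    (hμ0 : μ 0 = 0)
    (hμpos : ∀ s : ℝ, 0 < s → 0 < μ s)
    (sbar : ℕ → ℝ)
    (hsbar_mem : ∀ ℓ : ℕ, 1 ≤ ℓ → sbar ℓ ∈ Set.Ioo 0 sIn)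
    (hsbar_eq : ∀ ℓ : ℕ, 1 ≤ ℓ → D * (sIn - sbar ℓ) - k * μ (sbar ℓ) * (ℓ : ℝ) = 0)
    (phi : ℕ → ℝ → ℝ → ℝ)
    (hphi_init : ∀ ℓ : ℕ, 1 ≤ ℓ → ∀ s₀ : ℝ, 0 ≤ s₀ → phi ℓ s₀ 0 = s₀)
    (hphi_deriv : ∀ ℓ : ℕ, 1 ≤ ℓ → ∀ s₀ : ℝ, 0 ≤ s₀ → ∀ t : ℝ, 0 ≤ t →
      HasDerivWithinAt (phi ℓ s₀)
        (D * (sIn - phi ℓ s₀ t) - k * μ (phi ℓ s₀ t) * (ℓ : ℝ)) (Set.Ici 0) t) :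
    ∀ ℓ : ℕ, 1 ≤ ℓ → ∀ s₀ : ℝ, 0 ≤ s₀ → s₀ ≠ sbar ℓ →
      Set.InjOn (phi ℓ s₀) (Set.Ici 0) ∧
      (s₀ < sbar ℓ → phi ℓ s₀ '' Set.Ici 0 = Set.Ico s₀ (sbar ℓ)) ∧
      (sbar ℓ < s₀ → phi ℓ s₀ '' Set.Ici 0 = Set.Ioc (sbar ℓ) s₀) ∧
      (∀ s : ℝ,
        ((s₀ < sbar ℓ ∧ s ∈ Set.Ico s₀ (sbar ℓ)) ∨ (sbar ℓ < s₀ ∧ s ∈ Set.Ioc (sbar ℓ) s₀)) →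
        ∃! t : ℝ, 0 ≤ t ∧ phi ℓ s₀ t = s) := by
  intro ℓ hℓ s₀ hs₀ hne
  set sb := sbar ℓ with hsb
  obtain ⟨hsb0, hsbIn⟩ := hsbar_mem ℓ hℓ
  set F : ℝ → ℝ := fun s => D * (sIn - s) - k * μ s * (ℓ : ℝ) with hF
  have hℓpos : (0:ℝ) < (ℓ : ℝ) := by exact_mod_cast hℓ
  have hFb : F sb = 0 := hsbar_eq ℓ hℓ
  have hFanti : ∀ p ∈ Set.Ici (0:ℝ), ∀ q ∈ Set.Ici (0:ℝ), p < q → F q < F p := by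
    intro p hp q hq hpq
    have h1 := hμmono hp hq hpq
    have h2 : k * μ p * (ℓ:ℝ) < k * μ q * (ℓ:ℝ) := by
      have := mul_lt_mul_of_pos_right (mul_lt_mul_of_pos_left h1 hk) hℓpos
      linarith
    have h3 : D * (sIn - q) < D * (sIn - p) := by nlinarith
    simp only [hF]
    linarith
  have hμcont : ContinuousOn μ (Set.Ici 0) := hμC1.continuousOn
  have hFcontIci : ContinuousOn F (Set.Ici 0) := by
    apply ContinuousOn.sub
    · exact (continuous_const.mul (continuous_const.sub continuous_id)).continuousOn
    · exact (continuousOn_const.mul hμcont).mul continuousOn_const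
  -- helper building the final conclusion from injectivity plus the image description
  rcases lt_or_gt_of_ne hne with h1 | h1
  · -- s₀ < sb
    obtain ⟨C, hC0, hClip⟩ := lip_helper μ hμC1 sb
    set L := D + k * C * (ℓ:ℝ) with hL
    have hLnn : 0 ≤ L := by positivity
    have hsubIcc : Set.Icc s₀ sb ⊆ Set.Ici (0:ℝ) := fun u hu => le_trans hs₀ hu.1
    have hkey := key_ode F s₀ sb L (phi ℓ s₀) h1 hLnn (hphi_init ℓ hℓ s₀ hs₀)
      (fun t ht => hphi_deriv ℓ hℓ s₀ hs₀ t ht)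
      (hFcontIci.mono hsubIcc)
      (fun s hs => by
        have := hFanti s (le_trans hs₀ hs.1) sb (le_trans hs₀ (le_trans hs.1 hs.2.le)) hs.2
        linarith [hFb])
      hFb
      (fun s hs => by
        have hs' : s ∈ Set.Icc (0:ℝ) sb := ⟨le_trans hs₀ hs.1, hs.2⟩
        have hsb' : sb ∈ Set.Icc (0:ℝ) sb := ⟨hsb0.le, le_refl sb⟩
        have hlip := hClip s hs' sb hsb'
        rw [abs_of_nonneg (by linarith [hs.2] : (0:ℝ) ≤ sb - s)] at hlip
        have h2 : μ sb - μ s ≤ C * (sb - s) := le_trans (le_abs_self _) hlip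
        have h3 : F s - F sb = D * (sb - s) + k * (ℓ:ℝ) * (μ sb - μ s) := by
          simp only [hF]; ring
        have h4 : k * (ℓ:ℝ) * (μ sb - μ s) ≤ k * (ℓ:ℝ) * (C * (sb - s)) :=
          mul_le_mul_of_nonneg_left h2 (by positivity)
        have h5 : L * (sb - s) = D * (sb - s) + k * (ℓ:ℝ) * (C * (sb - s)) := by
          simp only [hL]; ring
        linarith [hFb])
    obtain ⟨hsm, himg⟩ := hkey
    refine ⟨hsm.injOn, fun _ => himg, fun h => absurd h (not_lt.2 h1.le), ?_⟩
    intro s hcase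
    have hsmem : s ∈ Set.Ico s₀ sb := by
      rcases hcase with ⟨_, hm⟩ | ⟨hgt, _⟩
      · exact hm
      · exact absurd hgt (not_lt.2 h1.le)
    rw [← himg] at hsmem
    obtain ⟨t, ht, heq⟩ := hsmem
    exact ⟨t, ⟨ht, heq⟩, fun t' ⟨ht', heq'⟩ => hsm.injOn ht' ht (heq'.trans heq.symm)⟩
  · -- sb < s₀
    obtain ⟨C, hC0, hClip⟩ := lip_helper μ hμC1 s₀
    set L := D + k * C * (ℓ:ℝ) with hL
    have hLnn : 0 ≤ L := by positivity
    set c := s₀ + sb with hc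
    set x : ℝ → ℝ := fun t => c - phi ℓ s₀ t with hx
    set G : ℝ → ℝ := fun u => -F (c - u) with hG
    have hsubIcc : Set.Icc sb s₀ ⊆ Set.Ici (0:ℝ) := fun u hu => le_trans hsb0.le hu.1
    have hcmem : ∀ u ∈ Set.Icc sb s₀, c - u ∈ Set.Icc sb s₀ := by
      intro u hu
      constructor
      · simp only [hc]; linarith [hu.2]
      · simp only [hc]; linarith [hu.1]
    have hkey := key_ode G sb s₀ L x h1 hLnn
      (by simp only [hx, hphi_init ℓ hℓ s₀ hs₀, hc]; ring)
      (fun t ht => by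
        have H := (hphi_deriv ℓ hℓ s₀ hs₀ t ht).const_sub c
        have hGx : G (x t) = -(D * (sIn - phi ℓ s₀ t) - k * μ (phi ℓ s₀ t) * (ℓ:ℝ)) := by
          simp only [hG, hx, sub_sub_cancel, hF]
        rw [hGx]
        exact H)
      (by
        apply ContinuousOn.neg
        apply hFcontIci.comp ((continuous_const.sub continuous_id).continuousOn)
        intro u hu
        exact hsubIcc (hcmem u hu))
      (fun u hu => by
        have hv : c - u ∈ Set.Icc sb s₀ := hcmem u ⟨hu.1, hu.2.le⟩
        have hvgt : sb < c - u := by simp only [hc]; linarith [hu.2]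
        have := hFanti sb hsb0.le (c - u) (le_trans hsb0.le hvgt.le) hvgt
        simp only [hG]
        linarith [hFb])
      (by
        simp only [hG, hc]
        have he : s₀ + sb - s₀ = sb := by ring
        rw [he]
        linarith [hFb])
      (fun u hu => by
        set v := c - u with hv
        have hvmem : v ∈ Set.Icc sb s₀ := hcmem u hu
        have hv0 : v ∈ Set.Icc (0:ℝ) s₀ := ⟨le_trans hsb0.le hvmem.1, hvmem.2⟩
        have hsb0' : sb ∈ Set.Icc (0:ℝ) s₀ := ⟨hsb0.le, h1.le⟩
        have hlip := hClip sb hsb0' v hv0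
        rw [abs_of_nonneg (by linarith [hvmem.1] : (0:ℝ) ≤ v - sb)] at hlip
        have h2 : μ v - μ sb ≤ C * (v - sb) := le_trans (le_abs_self _) hlip
        have h3 : F sb - F v = D * (v - sb) + k * (ℓ:ℝ) * (μ v - μ sb) := by
          simp only [hF]; ring
        have h4 : k * (ℓ:ℝ) * (μ v - μ sb) ≤ k * (ℓ:ℝ) * (C * (v - sb)) :=
          mul_le_mul_of_nonneg_left h2 (by positivity)
        have h5 : v - sb = s₀ - u := by simp only [hv, hc]; ring
        have h6 : G u = -F v := by simp only [hG, hv]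
        rw [h6]
        have h7 : L * (s₀ - u) = D * (s₀ - u) + k * (ℓ:ℝ) * (C * (s₀ - u)) := by
          simp only [hL]; ring
        rw [← h5] at h7 ⊢
        linarith [hFb])
    obtain ⟨hsm, himg⟩ := hkey
    have hinj : Set.InjOn (phi ℓ s₀) (Set.Ici 0) := by
      intro t ht t' ht' heq
      apply hsm.injOn ht ht'
      simp only [hx, heq]
    have himg2 : phi ℓ s₀ '' Set.Ici 0 = Set.Ioc sb s₀ := by
      have h3 : phi ℓ s₀ '' Set.Ici 0 = (fun u => c - u) '' (x '' Set.Ici 0) := by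
        rw [Set.image_image]
        apply Set.image_congr
        intro t _
        simp only [hx, sub_sub_cancel]
      rw [h3, himg, Set.image_const_sub_Ico]
      have e1 : c - s₀ = sb := by simp only [hc]; ring
      have e2 : c - sb = s₀ := by simp only [hc]; ring
      rw [e1, e2]
    refine ⟨hinj, fun h => absurd h (not_lt.2 h1.le), fun _ => himg2, ?_⟩
    intro s hcase
    have hsmem : s ∈ Set.Ioc sb s₀ := by
      rcases hcase with ⟨hlt, _⟩ | ⟨_, hm⟩
      · exact absurd hlt (not_lt.2 h1.le)
      · exact hm
    rw [← himg2] at hsmem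
    obtain ⟨t, ht, heq⟩ := hsmem
    exact ⟨t, ⟨ht, heq⟩, fun t' ⟨ht', heq'⟩ => hinj ht' ht (heq'.trans heq.symm)⟩
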